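/- Let E₁ be a real Banach space and let E₂, E₃ be real normed spaces. Let A : E₁ → E₂ and B : E₁ → E₃ be continuous linear maps such that B is a compact operator and there is a constant c > 0 with ‖u‖_{E₁} ≤ c (‖A u‖_{E₂} + ‖B u‖_{E₃}) for all u ∈ E₁. Then the kernel of A is finite-dimensional and the range of A is closed in E₂ (i.e., A is semi-Fredholm). -/

import Mathlib

/-- **Equivalence lemma (semi-Fredholm criterion).**  Let `E₁` be a real
Banach space and `E₂`, `E₃` real normed spaces.  Let `A : E₁ → E₂` and
`B : E₁ → E₃` be continuous linear maps such that `B` is a compact operator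
(maps bounded sets to relatively compact sets) and
`‖u‖ ≤ c (‖A u‖ + ‖B u‖)` for all `u` and some `c > 0`.  Then `ker A` is
finite-dimensional and the range of `A` is closed, i.e. `A` is semi-Fredholm. -/
theorem semiFredholm_of_estimate {E₁ E₂ E₃ : Type*}
    [NormedAddCommGroup E₁] [NormedSpace ℝ E₁] [CompleteSpace E₁]
    [NormedAddCommGroup E₂] [NormedSpace ℝ E₂]
    [NormedAddCommGroup E₃] [NormedSpace ℝ E₃]
    (A : E₁ →L[ℝ] E₂) (B : E₁ →L[ℝ] E₃)
    (hB_cpt : ∀ s : Set E₁, Bornology.IsBounded s → IsCompact (closure (B '' s)))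
    (c : ℝ) (hc : 0 < c)
    (hest : ∀ u : E₁, ‖u‖ ≤ c * (‖A u‖ + ‖B u‖)) :
    FiniteDimensional ℝ (LinearMap.ker (A : E₁ →ₗ[ℝ] E₂)) ∧ IsClosed (Set.range A) := by
  set K : Submodule ℝ E₁ := LinearMap.ker (A : E₁ →ₗ[ℝ] E₂) with hK
  -- the closed ball of `E₁` and its compact image data
  have hball : Bornology.IsBounded (Metric.closedBall (0 : E₁) 1) :=
    Metric.isBounded_closedBall
  have hCpt := hB_cpt _ hball
  -- Step 1 : `ker A` is finite dimensional
  have hfd : FiniteDimensional ℝ K := by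
    -- `B` restricted to the kernel is antilipschitz
    set f : K →L[ℝ] E₃ := B.comp K.subtypeL with hf
    have hanti : AntilipschitzWith c.toNNReal f := by
      apply f.antilipschitz_of_bound
      intro x
      have hx : A (x : E₁) = 0 := x.2
      have := hest (x : E₁)
      rw [hx] at this
      simpa [f, Real.coe_toNNReal _ hc.le] using this
    -- the closed unit ball of `K` is totally bounded
    have htb : TotallyBounded (Metric.closedBall (0 : K) 1) := by
      have h1 : TotallyBounded (f '' Metric.closedBall (0 : K) 1) := by
        apply (hCpt.totallyBounded).subset
        intro y hy
        rcases hy with ⟨x, hx, rfl⟩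
        apply subset_closure
        refine ⟨(x : E₁), ?_, rfl⟩
        simpa [Metric.mem_closedBall, dist_eq_norm] using
          (by simpa [Metric.mem_closedBall, dist_eq_norm] using hx : ‖x‖ ≤ 1)
      exact (totallyBounded_image_iff
        (hanti.isUniformEmbedding f.uniformContinuous).isUniformInducing).1 h1
    have hcomplete : IsComplete (Metric.closedBall (0 : K) 1) := by
      have : CompleteSpace K := A.isClosed_ker.completeSpace_coe
      exact Metric.isClosed_closedBall.isComplete
    have hcompact : IsCompact (Metric.closedBall (0 : K) 1) :=
      isCompact_iff_totallyBounded_isComplete.2 ⟨htb, hcomplete⟩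
    exact FiniteDimensional.of_isCompact_closedBall₀ ℝ one_pos hcompact
  refine ⟨hfd, ?_⟩
  haveI := hfd
  -- Step 2 : closed complement of the kernel
  obtain ⟨M, hMclosed, hcompl⟩ :=
    (Submodule.ClosedComplemented.of_finiteDimensional K).exists_isClosed_isCompl
  haveI : CompleteSpace M := hMclosed.completeSpace_coe
  set g : M →L[ℝ] E₂ := A.comp M.subtypeL with hg
  -- `g` is bounded below
  have hbound : ∃ k : NNReal, ∀ x : M, ‖x‖ ≤ (k : ℝ) * ‖g x‖ := by
    by_contra hcon
    push_neg at hcon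
    -- produce a normalized sequence
    have hseq : ∀ n : ℕ, ∃ w : M, ‖w‖ = 1 ∧ ‖g w‖ < 1 / (n + 1 : ℝ) := by
      intro n
      obtain ⟨v, hv⟩ := hcon ((n + 1 : ℕ) : NNReal)
      have hpos : (0 : ℝ) < (n : ℝ) + 1 := by positivity
      have hv' : ((n : ℝ) + 1) * ‖g v‖ < ‖v‖ := by push_cast at hv; linarith
      have hv0 : v ≠ 0 := by
        rintro rfl
        simp at hv'
      have hvnorm : (0 : ℝ) < ‖v‖ := norm_pos_iff.2 hv0
      refine ⟨‖v‖⁻¹ • v, ?_, ?_⟩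
      · rw [norm_smul, norm_inv, norm_norm]
        exact inv_mul_cancel₀ hvnorm.ne'
      · rw [map_smul, norm_smul, norm_inv, norm_norm, one_div]
        have h1 := mul_lt_mul_of_pos_left hv' (inv_pos.2 hpos)
        rw [← mul_assoc, inv_mul_cancel₀ hpos.ne', one_mul] at h1
        have h3 := mul_lt_mul_of_pos_left h1 (inv_pos.2 hvnorm)
        have h4 : ‖v‖⁻¹ * (((n : ℝ) + 1)⁻¹ * ‖v‖) = ((n : ℝ) + 1)⁻¹ := by
          rw [mul_comm, mul_assoc, mul_inv_cancel₀ hvnorm.ne', mul_one]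
        rwa [h4] at h3
    choose w hw1 hw2 using hseq
    -- `A (w n) → 0`
    have hA0 : Filter.Tendsto (fun n => g (w n)) Filter.atTop (nhds 0) := by
      apply squeeze_zero_norm (fun n => (hw2 n).le)
      exact tendsto_one_div_add_atTop_nhds_zero_nat
    -- `B (w n)` lies in a compact set
    have hmem : ∀ n, B ((w n : E₁)) ∈ closure (B '' Metric.closedBall (0 : E₁) 1) := by
      intro n
      apply subset_closure
      refine ⟨(w n : E₁), ?_, rfl⟩
      simp only [Metric.mem_closedBall, dist_eq_norm, sub_zero]
      exact le_of_eq (hw1 n)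
    obtain ⟨y, -, φ, hφ, hconv⟩ := hCpt.tendsto_subseq hmem
    -- the subsequence is Cauchy
    have hcauchy : CauchySeq (fun n => ((w (φ n) : E₁))) := by
      rw [Metric.cauchySeq_iff]
      intro ε hε
      have hε4 : 0 < ε / (4 * c) := by positivity
      -- A-part small
      obtain ⟨N₁, hN₁⟩ := (Metric.tendsto_atTop.1 (hA0.comp hφ.tendsto_atTop)) _ hε4
      -- B-part Cauchy
      obtain ⟨N₂, hN₂⟩ := Metric.cauchySeq_iff.1 hconv.cauchySeq (ε / (4 * c)) hε4
      refine ⟨max N₁ N₂, fun m hm n hn => ?_⟩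
      have hm1 := hN₁ m (le_of_max_le_left hm)
      have hn1 := hN₁ n (le_of_max_le_left hn)
      have h2 := hN₂ m (le_of_max_le_right hm) n (le_of_max_le_right hn)
      simp only [Function.comp, dist_eq_norm, sub_zero] at hm1 hn1 h2 ⊢
      set um := ((w (φ m) : E₁))
      set un := ((w (φ n) : E₁))
      have hAm : ‖A um‖ = ‖g (w (φ m))‖ := rfl
      have hAn : ‖A un‖ = ‖g (w (φ n))‖ := rfl
      have key : ‖um - un‖ ≤ c * (‖A (um - un)‖ + ‖B (um - un)‖) := hest _
      have hAle : ‖A (um - un)‖ ≤ ‖A um‖ + ‖A un‖ := by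
        rw [map_sub]; exact norm_sub_le _ _
      have hBeq : ‖B (um - un)‖ = ‖B um - B un‖ := by rw [map_sub]
      calc ‖um - un‖ ≤ c * (‖A (um - un)‖ + ‖B (um - un)‖) := key
        _ ≤ c * ((‖A um‖ + ‖A un‖) + ‖B um - B un‖) := by
            apply mul_le_mul_of_nonneg_left _ hc.le
            rw [hBeq]
            exact add_le_add_left hAle _
        _ < c * ((ε / (4 * c) + ε / (4 * c)) + ε / (4 * c)) := by
            apply mul_lt_mul_of_pos_left _ hc
            have : ‖B um - B un‖ < ε / (4 * c) := h2
            rw [hAm, hAn]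
            exact add_lt_add (add_lt_add hm1 hn1) this
        _ = (3 / 4) * ε := by field_simp; ring
        _ < ε := by linarith
    obtain ⟨u, hu⟩ := cauchySeq_tendsto_of_complete hcauchy
    have huM : u ∈ M := by
      have : ∀ n, ((w (φ n) : E₁)) ∈ (M : Set E₁) := fun n => (w (φ n)).2
      exact hMclosed.mem_of_tendsto hu (Filter.Eventually.of_forall this)
    have hunorm : ‖u‖ = 1 := by
      have := (continuous_norm.tendsto u).comp hu
      have h1 : Filter.Tendsto (fun n => ‖((w (φ n) : E₁))‖) Filter.atTop (nhds ‖u‖) := this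
      have h2 : (fun n => ‖((w (φ n) : E₁))‖) = fun _ => (1 : ℝ) := by
        funext n; exact hw1 (φ n)
      rw [h2] at h1
      exact (tendsto_const_nhds_iff.1 h1).symm
    have huker : A u = 0 := by
      have h1 : Filter.Tendsto (fun n => A ((w (φ n) : E₁))) Filter.atTop (nhds (A u)) :=
        (A.continuous.tendsto u).comp hu
      have h2 : Filter.Tendsto (fun n => A ((w (φ n) : E₁))) Filter.atTop (nhds 0) := by
        have : (fun n => A ((w (φ n) : E₁))) = (fun n => g (w n)) ∘ φ := rfl
        rw [this]
        exact hA0.comp hφ.tendsto_atTop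
      exact tendsto_nhds_unique h1 h2
    have : u ∈ K ⊓ M := ⟨huker, huM⟩
    rw [hcompl.inf_eq_bot] at this
    simp only [Submodule.mem_bot] at this
    rw [this] at hunorm
    simp at hunorm
  obtain ⟨k, hk⟩ := hbound
  have hanti : AntilipschitzWith k g := g.antilipschitz_of_bound hk
  have hrange : IsClosed (Set.range g) := hanti.isClosed_range g.uniformContinuous
  have heq : Set.range A = Set.range g := by
    ext y
    constructor
    · rintro ⟨u, rfl⟩
      have hu : u ∈ K ⊔ M := by rw [hcompl.sup_eq_top]; trivial
      obtain ⟨p, hp, q, hq, rfl⟩ := Submodule.mem_sup.1 hu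
      refine ⟨⟨q, hq⟩, ?_⟩
      have hp0 : A p = 0 := hp
      simp [g, hp0]
    · rintro ⟨⟨v, hv⟩, rfl⟩
      exact ⟨v, rfl⟩
  rw [heq]
  exact hrange
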